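/- arXiv:1109.3986 — 2 statements merged into one kernel-verified Lean document; each statement's English description precedes it below -/
import Mathlib

section
/- Let W be a Weyl group with simple roots Π and x ∈ W. Suppose J ⊆ Π ∩ xΠ. Then there exists a subset K ⊆ Π with xK = J and w_J x = x w_K, where w_J and w_K are the longest elements of the parabolic subgroups W_J and W_K respectively. -/
/-!
STATEMENT 4: If `J ⊆ Π ∩ xΠ`, then there is `K ⊆ Π` with `xK = J` and `w_J x = x w_K`.
Here `Π ∩ xΠ` and the condition `xK = J` are expressed combinatorially:
`x α_j = α_i` (with `α_i, α_j` simple) corresponds to `s_i x = x s_j` together with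
`ℓ(x s_j) = ℓ(x) + 1`.
-/

open scoped Classical

section
variable {B W : Type*} [Group W] [Finite W] {M : CoxeterMatrix B}

/-- The parabolic subgroup `W_J` generated by the simple reflections `s_α`, `α ∈ J`. -/
def parabolic (cs : CoxeterSystem M W) (J : Set B) : Subgroup W :=
  Subgroup.closure (cs.simple '' J)

/-- `w` is the longest element of the parabolic subgroup `W_J`. -/
def IsLongestIn (cs : CoxeterSystem M W) (J : Set B) (w : W) : Prop :=
  w ∈ parabolic cs J ∧ ∀ v ∈ parabolic cs J, cs.length v ≤ cs.length w

/-- The set `Π ∩ xΠ` of simple roots mapped to simple roots by `x`, described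
combinatorially: `Π ∩ xΠ = {β ∈ Π | ∃ α ∈ Π, s_β = x s_α x⁻¹ and ℓ(x s_α) = ℓ(x) + 1}`. -/
def simpleCap (cs : CoxeterSystem M W) (x : W) : Set B :=
  {i | ∃ j, cs.simple i * x = x * cs.simple j ∧
    cs.length (x * cs.simple j) = cs.length x + 1}

/-- The weak right order on `W`: `v ≤_R w` iff `w = v u` with `ℓ(w) = ℓ(v) + ℓ(u)`. -/
def leR (cs : CoxeterSystem M W) (v w : W) : Prop :=
  ∃ u : W, w = v * u ∧ cs.length w = cs.length v + cs.length u

end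

namespace SE

open List

variable {B W : Type*} [Group W] {M : CoxeterMatrix B} (cs : CoxeterSystem M W)

local prefix:100 "s" => cs.simple
local prefix:100 "π" => cs.wordProd
local prefix:100 "ℓ" => cs.length

noncomputable def flipFun (i : B) : W × ℤˣ → W × ℤˣ :=
  fun p => (s i * p.1 * s i, if p.1 = s i then -p.2 else p.2)

theorem simple_conj_conj (i : B) (t : W) : s i * (s i * t * s i) * s i = t := by
  have h := cs.simple_mul_simple_self i
  calc s i * (s i * t * s i) * s i = (s i * s i) * t * (s i * s i) := by group
  _ = t := by rw [h]; group

theorem simple_conj_eq_iff (i : B) (t : W) : s i * t * s i = s i ↔ t = s i := by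
  constructor
  · intro h
    have := congrArg (fun y => s i * y * s i) h
    rw [simple_conj_conj cs] at this
    rw [this, cs.simple_mul_simple_self, one_mul]
  · rintro rfl
    rw [cs.simple_mul_simple_self, one_mul]

theorem flipFun_involutive (i : B) : Function.Involutive (flipFun cs i) := by
  rintro ⟨t, ε⟩
  simp only [flipFun]
  rcases eq_or_ne t (s i) with h | h
  · subst h
    simp [simple_conj_eq_iff cs, simple_conj_conj cs]
  · rw [if_neg h, if_neg (fun hh => h ((simple_conj_eq_iff cs i t).mp hh))]
    rw [simple_conj_conj cs]

noncomputable def flip (i : B) : Equiv.Perm (W × ℤˣ) :=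
  Function.Involutive.toPerm _ (flipFun_involutive cs i)

theorem flip_apply (i : B) (t : W) (ε : ℤˣ) :
    flip cs i (t, ε) = (s i * t * s i, if t = s i then -ε else ε) := rfl

/-- The comparison sequence for the pair `(i, j)`. -/
noncomputable def cseq (i j : B) (k : ℕ) : W := (s j * s i) ^ k * s j

theorem cseq_add_two (i j : B) (k : ℕ) :
    cseq cs i j (k + 2) = (s i * s j)⁻¹ * cseq cs i j k * (s i * s j) := by
  unfold cseq
  have h2 : ((s j * s i : W)) ^ (k + 2) = (s j * s i) * (s j * s i) ^ k * (s j * s i) := by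
    rw [pow_succ, pow_succ']
  rw [h2]
  simp only [mul_inv_rev, cs.inv_simple]
  group

theorem flip_mul_pow_apply (i j : B) (n : ℕ) (t : W) (ε : ℤˣ) :
    ((flip cs i * flip cs j) ^ n) (t, ε) =
      ((s i * s j) ^ n * t * ((s i * s j) ^ n)⁻¹,
        ε * ∏ k ∈ Finset.range (2 * n), (if t = cseq cs i j k then (-1 : ℤˣ) else 1)) := by
  induction n generalizing t ε with
  | zero => simp
  | succ n ih =>
    rw [pow_succ, Equiv.Perm.mul_apply]
    have c0 : cseq cs i j 0 = s j := by simp [cseq]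
    have c1 : cseq cs i j 1 = s j * s i * s j := by simp [cseq]
    have hcond : (s j * t * s j = s i) ↔ t = s j * s i * s j := by
      constructor
      · intro h
        have h2 : s j * (s j * t * s j) * s j = s j * s i * s j := by rw [h]
        rw [simple_conj_conj cs] at h2
        exact h2
      · rintro rfl
        exact simple_conj_conj cs j (s i)
    have hPa : (flip cs i * flip cs j) (t, ε) =
        ((s i * s j) * t * (s i * s j)⁻¹,
          ε * ((if t = cseq cs i j 0 then (-1 : ℤˣ) else 1) *
            (if t = cseq cs i j 1 then (-1 : ℤˣ) else 1))) := by
      rw [Equiv.Perm.mul_apply, flip_apply, flip_apply]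
      rw [c0, c1]
      simp only [Prod.mk.injEq]
      constructor
      · simp only [mul_inv_rev, cs.inv_simple]
        group
      · rw [if_congr hcond rfl rfl]
        by_cases h1 : t = s j <;> by_cases h2 : t = s j * s i * s j <;>
          simp [h1, h2]
    rw [hPa, ih]
    simp only [Prod.mk.injEq]
    constructor
    · rw [pow_succ]
      group
    · have hsh : (∏ k ∈ Finset.range (2 * n),
            (if (s i * s j) * t * (s i * s j)⁻¹ = cseq cs i j k then (-1 : ℤˣ) else 1))
          = ∏ k ∈ Finset.range (2 * n),
            (if t = cseq cs i j (k + 1 + 1) then (-1 : ℤˣ) else 1) := by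
        refine Finset.prod_congr rfl (fun k _ => ?_)
        refine if_congr ?_ rfl rfl
        have hc2 : cseq cs i j (k + 1 + 1) = (s i * s j)⁻¹ * cseq cs i j k * (s i * s j) :=
          cseq_add_two cs i j k
        rw [hc2]
        constructor
        · intro hq; rw [← hq]; group
        · intro hq; rw [hq]; group
      have key : ∏ k ∈ Finset.range (2 * (n + 1)),
            (if t = cseq cs i j k then (-1 : ℤˣ) else 1)
          = ((if t = cseq cs i j 0 then (-1 : ℤˣ) else 1)
              * (if t = cseq cs i j 1 then (-1 : ℤˣ) else 1))
            * ∏ k ∈ Finset.range (2 * n),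
              (if t = cseq cs i j (k + 1 + 1) then (-1 : ℤˣ) else 1) := by
        rw [show 2 * (n + 1) = 2 * n + 1 + 1 by ring]
        rw [Finset.prod_range_succ' (fun k => if t = cseq cs i j k then (-1 : ℤˣ) else 1)
          (2 * n + 1)]
        rw [Finset.prod_range_succ'
          (fun k => if t = cseq cs i j (k + 1) then (-1 : ℤˣ) else 1) (2 * n)]
        simp only [mul_comm, mul_left_comm, mul_assoc]
      rw [hsh, key]
      simp only [mul_assoc]

theorem flip_liftable : M.IsLiftable (flip cs) := by
  intro i j
  apply Equiv.ext
  rintro ⟨t, ε⟩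
  have hz : ((s i * s j : W)) ^ (M i j) = 1 := cs.simple_mul_simple_pow i j
  have hy : ((s j * s i : W)) ^ (M i j) = 1 := cs.simple_mul_simple_pow' i j
  have hper : ∀ k, cseq cs i j (M i j + k) = cseq cs i j k := by
    intro k
    unfold cseq
    rw [pow_add, hy, one_mul]
  have hprod : ∏ k ∈ Finset.range (2 * M i j), (if t = cseq cs i j k then (-1 : ℤˣ) else 1) = 1 := by
    rw [two_mul, Finset.prod_range_add]
    simp only [hper]
    exact Int.units_mul_self _
  rw [Equiv.Perm.one_apply, flip_mul_pow_apply, hz, hprod]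
  simp

/-- The sign representation on `W × ℤˣ`. -/
noncomputable def sgnPerm : W →* Equiv.Perm (W × ℤˣ) :=
  cs.lift ⟨flip cs, flip_liftable cs⟩

theorem sgnPerm_simple (i : B) : sgnPerm cs (s i) = flip cs i :=
  cs.lift_apply_simple (flip_liftable cs) i

/-- The sign of `t` relative to `w`. -/
noncomputable def sgn (w t : W) : ℤˣ := (sgnPerm cs w (t, 1)).2

theorem sgnPerm_fst (w t : W) (ε : ℤˣ) : (sgnPerm cs w (t, ε)).1 = w * t * w⁻¹ := by
  induction w using CoxeterSystem.simple_induction_left cs generalizing t ε with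
  | one => simp
  | mul_simple_left w i ih =>
    rw [map_mul, Equiv.Perm.mul_apply, sgnPerm_simple]
    have : sgnPerm cs w (t, ε) = ((sgnPerm cs w (t, ε)).1, (sgnPerm cs w (t, ε)).2) := rfl
    rw [this, ih, flip_apply]
    simp only [mul_inv_rev, cs.inv_simple]
    group

theorem sgnPerm_snd (w t : W) (ε : ℤˣ) : (sgnPerm cs w (t, ε)).2 = ε * sgn cs w t := by
  induction w using CoxeterSystem.simple_induction_left cs generalizing t ε with
  | one => simp [sgn]
  | mul_simple_left w i ih =>
    unfold sgn
    rw [map_mul, Equiv.Perm.mul_apply, Equiv.Perm.mul_apply, sgnPerm_simple]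
    have h1 : sgnPerm cs w (t, ε) = (w * t * w⁻¹, ε * sgn cs w t) :=
      Prod.ext (sgnPerm_fst cs w t ε) (ih t ε)
    have h2 : sgnPerm cs w (t, 1) = (w * t * w⁻¹, sgn cs w t) :=
      Prod.ext (sgnPerm_fst cs w t 1) (by rw [ih t 1, one_mul])
    rw [h1, h2, flip_apply, flip_apply]
    rcases eq_or_ne (w * t * w⁻¹) (s i) with h | h
    · simp [h, mul_comm]
    · simp [h]

theorem sgnPerm_apply (w t : W) (ε : ℤˣ) :
    sgnPerm cs w (t, ε) = (w * t * w⁻¹, ε * sgn cs w t) := by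
  rw [← sgnPerm_fst cs w t ε, ← sgnPerm_snd cs w t ε]

theorem sgn_mul (u v t : W) : sgn cs (u * v) t = sgn cs v t * sgn cs u (v * t * v⁻¹) := by
  have key : sgnPerm cs (u * v) (t, 1)
      = (u * (v * t * v⁻¹) * u⁻¹, sgn cs v t * sgn cs u (v * t * v⁻¹)) := by
    rw [map_mul, Equiv.Perm.mul_apply, sgnPerm_apply cs v t 1, one_mul, sgnPerm_apply]
  calc sgn cs (u * v) t = (sgnPerm cs (u * v) (t, 1)).2 := rfl
  _ = _ := by rw [key]

theorem sgn_simple (i : B) (t : W) : sgn cs (s i) t = if t = s i then -1 else 1 := by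
  unfold sgn
  rw [sgnPerm_simple, flip_apply]

theorem sgn_wordProd (ω : List B) (t : W) :
    sgn cs (π ω) t =
      ((cs.rightInvSeq ω).map (fun u => if t = u then (-1 : ℤˣ) else 1)).prod := by
  induction ω generalizing t with
  | nil => simp [sgn]
  | cons i ω ih =>
    rw [cs.wordProd_cons, sgn_mul, CoxeterSystem.rightInvSeq]
    rw [List.map_cons, List.prod_cons, sgn_simple, ih]
    have hcond : (π ω * t * (π ω)⁻¹ = s i) ↔ (t = (π ω)⁻¹ * s i * π ω) := by
      constructor
      · intro h; rw [← h]; group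
      · intro h; rw [h]; group
    rw [if_congr hcond rfl rfl]
    exact mul_comm _ _

theorem sgn_eq_one_of_not_mem (ω : List B) (t : W) (h : t ∉ cs.rightInvSeq ω) :
    sgn cs (π ω) t = 1 := by
  rw [sgn_wordProd]
  apply List.prod_eq_one
  intro x hx
  obtain ⟨u, hu, rfl⟩ := List.mem_map.mp hx
  rw [if_neg (fun hh => h (by rw [hh]; exact hu))]

theorem mem_rightInvSeq_of_sgn_ne_one (ω : List B) (t : W) (h : sgn cs (π ω) t ≠ 1) :
    t ∈ cs.rightInvSeq ω := by
  by_contra hmem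
  exact h (sgn_eq_one_of_not_mem cs ω t hmem)

theorem sgn_refl_self (ω : List B) (i : B) :
    sgn cs (π ω * s i * (π ω)⁻¹) (π ω * s i * (π ω)⁻¹) = -1 := by
  induction ω with
  | nil => simp [sgn_simple]
  | cons j ω ih =>
    generalize hX : π ω * s i * (π ω)⁻¹ = t' at ih
    have hjj := cs.simple_mul_simple_self j
    have hw : π (j :: ω) * s i * (π (j :: ω))⁻¹ = s j * (t' * s j) := by
      rw [cs.wordProd_cons, ← hX]
      simp only [mul_inv_rev, cs.inv_simple]
      group
    rw [hw]
    have e1 : (t' * s j) * (s j * (t' * s j)) * (t' * s j)⁻¹ = t' := by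
      calc (t' * s j) * (s j * (t' * s j)) * (t' * s j)⁻¹
          = t' * (s j * s j) * t' * (s j * (s j)⁻¹) * t'⁻¹ := by group
        _ = t' := by rw [hjj]; group
    have e2 : s j * (s j * (t' * s j)) * (s j)⁻¹ = t' := by
      calc s j * (s j * (t' * s j)) * (s j)⁻¹
          = (s j * s j) * t' * (s j * (s j)⁻¹) := by group
        _ = t' := by rw [hjj]; group
    have hiff : (s j * (t' * s j) = s j) ↔ (t' = s j) := by
      rw [← simple_conj_eq_iff cs j t', ← mul_assoc]
    rw [sgn_mul cs (s j) (t' * s j), e1]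
    rw [sgn_mul cs t' (s j), e2]
    rw [ih]
    rw [sgn_simple, sgn_simple]
    rw [if_congr hiff rfl rfl]
    rcases eq_or_ne t' (s j) with h | h
    · rw [if_pos h]
      norm_num
    · rw [if_neg h]
      norm_num

theorem sgn_refl_self' (t : W) (ht : cs.IsReflection t) : sgn cs t t = -1 := by
  obtain ⟨w, i, rfl⟩ := ht
  obtain ⟨ω, _, rfl⟩ := cs.exists_reduced_word' w
  exact sgn_refl_self cs ω i

theorem descent_of_sgn_neg (w t : W) (h : sgn cs w t = -1) : ℓ (w * t) < ℓ w := by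
  obtain ⟨ω, hω, rfl⟩ := cs.exists_reduced_word' w
  have hmem : t ∈ cs.rightInvSeq ω :=
    mem_rightInvSeq_of_sgn_ne_one cs ω t (by simp [h])
  exact (cs.isRightInversion_of_mem_rightInvSeq hω hmem).2

theorem sgn_neg_of_descent (w t : W) (ht : cs.IsReflection t) (hl : ℓ (w * t) < ℓ w) :
    sgn cs w t = -1 := by
  have htt : t * t = 1 := ht.mul_self
  have h1 : sgn cs w t = sgn cs t t * sgn cs (w * t) (t * t * t⁻¹) := by
    have e : (w * t) * t = w := by rw [mul_assoc, htt, mul_one]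
    rw [← sgn_mul, e]
  have e2 : t * t * t⁻¹ = t := by rw [htt, one_mul, ht.inv]
  rw [e2, sgn_refl_self' cs t ht] at h1
  rcases Int.units_eq_one_or (sgn cs (w * t) t) with h | h
  · rw [h1, h, mul_one]
  · exfalso
    have := descent_of_sgn_neg cs (w * t) t h
    rw [mul_assoc, htt, mul_one] at this
    omega

theorem strong_exchange (ω : List B) (t : W) (ht : cs.IsReflection t)
    (hl : ℓ (π ω * t) < ℓ (π ω)) : t ∈ cs.rightInvSeq ω :=
  mem_rightInvSeq_of_sgn_ne_one cs ω t
    (by rw [sgn_neg_of_descent cs (π ω) t ht hl]; simp)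

theorem exchange_eraseIdx (ω : List B) (t : W) (ht : cs.IsReflection t)
    (hl : ℓ (π ω * t) < ℓ (π ω)) :
    ∃ k < ω.length, π ω * t = π (ω.eraseIdx k) := by
  have hmem := strong_exchange cs ω t ht hl
  obtain ⟨k, hk, hkt⟩ := List.mem_iff_getElem.mp hmem
  have hk' : k < ω.length := by simpa using hk
  refine ⟨k, hk', ?_⟩
  rw [← cs.wordProd_mul_getD_rightInvSeq ω k]
  congr 1
  rw [List.getD_eq_getElem _ 1 hk]
  exact hkt.symm

theorem rightInvSeq_append (χ κ : List B) :
    cs.rightInvSeq (χ ++ κ) =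
      (cs.rightInvSeq χ).map (fun t => (π κ)⁻¹ * t * π κ) ++ cs.rightInvSeq κ := by
  induction χ with
  | nil => simp
  | cons i χ ih =>
    rw [List.cons_append]
    show cs.rightInvSeq (i :: (χ ++ κ)) = _
    rw [CoxeterSystem.rightInvSeq, ih]
    show _ = ((π χ)⁻¹ * s i * π χ :: (cs.rightInvSeq χ)).map _ ++ cs.rightInvSeq κ
    rw [List.map_cons, List.cons_append]
    congr 1
    rw [cs.wordProd_append]
    simp [mul_assoc]

def parabolicSE (K : Set B) : Subgroup W := Subgroup.closure (cs.simple '' K)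

theorem wordProd_mem_parabolic {K : Set B} (ω : List B) (hω : ∀ i ∈ ω, i ∈ K) :
    π ω ∈ parabolicSE cs K := by
  induction ω with
  | nil => simp [one_mem]
  | cons i ω ih =>
    rw [cs.wordProd_cons]
    exact mul_mem (Subgroup.subset_closure ⟨i, hω i (List.mem_cons_self), rfl⟩)
      (ih fun j hj => hω j (List.mem_cons_of_mem i hj))

theorem exists_word_of_mem_parabolic {K : Set B} {v : W} (hv : v ∈ parabolicSE cs K) :
    ∃ ω : List B, (∀ i ∈ ω, i ∈ K) ∧ π ω = v := by
  induction hv using Subgroup.closure_induction with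
  | mem x hx =>
    obtain ⟨i, hi, rfl⟩ := hx
    exact ⟨[i], by simpa using hi, by simp [cs.wordProd_cons]⟩
  | one => exact ⟨[], by simp, by simp⟩
  | mul x y _ _ ihx ihy =>
    obtain ⟨ω₁, h1, rfl⟩ := ihx
    obtain ⟨ω₂, h2, rfl⟩ := ihy
    exact ⟨ω₁ ++ ω₂, by
      intro i hi
      rcases List.mem_append.mp hi with h | h
      exacts [h1 i h, h2 i h], by rw [cs.wordProd_append]⟩
  | inv x _ ihx =>
    obtain ⟨ω, h1, rfl⟩ := ihx
    exact ⟨ω.reverse, fun i hi => h1 i (List.mem_reverse.mp hi), by simp⟩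

theorem exists_reduced_word_sub (n : ℕ) :
    ∀ ω : List B, ω.length ≤ n →
      ∃ ω' : List B, (∀ i ∈ ω', i ∈ ω) ∧ π ω' = π ω ∧ cs.IsReduced ω' := by
  induction n with
  | zero =>
    intro ω h
    rw [List.length_eq_zero_iff.mp (Nat.le_zero.mp h)]
    exact ⟨[], by simp, rfl, by simp [CoxeterSystem.IsReduced]⟩
  | succ n ih =>
    intro ω hlen
    by_cases hred : cs.IsReduced ω
    · exact ⟨ω, fun _ h => h, rfl, hred⟩
    · have hne : ω ≠ [] := by
        rintro rfl
        exact hred (by simp [CoxeterSystem.IsReduced])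
      have hlpos : 0 < ω.length := List.length_pos_iff.mpr hne
      have hwit : ¬ cs.IsReduced (ω.take (ω.length - 1 + 1)) := by
        rwa [show ω.length - 1 + 1 = ω.length by omega, List.take_length]
      have hex : ∃ k, ¬ cs.IsReduced (ω.take (k + 1)) := ⟨ω.length - 1, hwit⟩
      set k := Nat.find hex with hkdef
      have hk : ¬ cs.IsReduced (ω.take (k + 1)) := Nat.find_spec hex
      have hklt : k < ω.length := by
        have : k ≤ ω.length - 1 := Nat.find_min' hex hwit
        omega
      have hkred : cs.IsReduced (ω.take k) := by
        rcases Nat.eq_zero_or_pos k with h0 | h0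
        · rw [h0]
          simp [CoxeterSystem.IsReduced]
        · have hmin := Nat.find_min hex (show k - 1 < k from Nat.sub_lt h0 one_pos)
          rw [show k - 1 + 1 = k by omega] at hmin
          exact not_not.mp hmin
      have hlen_take : (ω.take k).length = k := by
        rw [List.length_take]
        omega
      set jl := ω.get ⟨k, hklt⟩ with hjl
      have htake : ω.take (k + 1) = ω.take k ++ [jl] := by
        rw [List.take_succ]
        congr
        rw [List.getElem?_eq_getElem hklt]
        rfl
      have h2 : π (ω.take (k + 1)) = π (ω.take k) * s jl := by
        rw [htake, cs.wordProd_append]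
        congr 1
        simp [cs.wordProd_cons]
      have hlred : ℓ (π (ω.take k)) = k := by
        rw [hkred, hlen_take]
      have hlt : ℓ (π (ω.take k) * s jl) < ℓ (π (ω.take k)) := by
        have h3 : ℓ (π (ω.take k) * s jl) ≤ k + 1 := by
          calc ℓ (π (ω.take k) * s jl) ≤ ℓ (π (ω.take k)) + ℓ (s jl) := cs.length_mul_le _ _
          _ = k + 1 := by rw [hlred, cs.length_simple]
        have h4 : ℓ (π (ω.take k) * s jl) ≠ k + 1 := by
          intro hc
          apply hk
          unfold CoxeterSystem.IsReduced
          rw [h2, hc, List.length_take]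
          omega
        have h5 : ℓ (π (ω.take k) * s jl) ≠ ℓ (π (ω.take k)) := cs.length_mul_simple_ne _ _
        omega
      obtain ⟨p, hp, heq⟩ := exchange_eraseIdx cs (ω.take k) (s jl) (cs.isReflection_simple jl) hlt
      set ω'' := (ω.take k).eraseIdx p ++ ω.drop (k + 1) with hω''
      have hprod : π ω'' = π ω := by
        conv_rhs => rw [← List.take_append_drop (k + 1) ω]
        rw [hω'', cs.wordProd_append, cs.wordProd_append, ← heq, h2]
      have hlen'' : ω''.length ≤ n := by
        have e1 : ((ω.take k).eraseIdx p).length = k - 1 := by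
          rw [List.length_eraseIdx]
          rw [hlen_take] at hp ⊢
          simp [hp]
        have e2 : (ω.drop (k + 1)).length = ω.length - (k + 1) := by simp
        rw [hω'', List.length_append, e1, e2]
        omega
      have hsub : ∀ i ∈ ω'', i ∈ ω := by
        intro i hi
        rcases List.mem_append.mp hi with h | h
        · exact (List.take_sublist k ω).mem ((List.eraseIdx_sublist _ p).mem h)
        · exact (List.drop_sublist (k + 1) ω).mem h
      obtain ⟨ω', hs1, hs2, hs3⟩ := ih ω'' hlen''
      exact ⟨ω', fun i hi => hsub i (hs1 i hi), by rw [hs2, hprod], hs3⟩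

theorem exists_reduced_word_mem_parabolic {K : Set B} {v : W} (hv : v ∈ parabolicSE cs K) :
    ∃ ω : List B, (∀ i ∈ ω, i ∈ K) ∧ π ω = v ∧ cs.IsReduced ω := by
  obtain ⟨ω, hω, rfl⟩ := exists_word_of_mem_parabolic cs hv
  obtain ⟨ω', h1, h2, h3⟩ := exists_reduced_word_sub cs ω.length ω le_rfl
  exact ⟨ω', fun i hi => hω i (h1 i hi), h2, h3⟩

theorem length_mul_eq_of_no_descent {K : Set B} (x : W)
    (hx : ∀ j ∈ K, ℓ x < ℓ (x * s j)) :
    ∀ v ∈ parabolicSE cs K, ℓ (x * v) = ℓ x + ℓ v := by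
  set P := parabolicSE cs K with hP
  have hex : ∃ n, ∃ c, c ∈ P ∧ ℓ (x * c) = n := ⟨ℓ (x * 1), 1, one_mem _, rfl⟩
  obtain ⟨c₀, hc₀, hn₀⟩ := Nat.find_spec hex
  have hmin : ∀ c ∈ P, Nat.find hex ≤ ℓ (x * c) :=
    fun c hc => Nat.find_min' hex ⟨c, hc, rfl⟩
  set u := x * c₀ with hu
  have claim : ∀ m : ℕ, ∀ v ∈ P, ℓ v ≤ m → ℓ (u * v) = ℓ u + ℓ v := by
    intro m
    induction m with
    | zero =>
      intro v hv hl
      have hv1 : v = 1 := cs.length_eq_zero_iff.mp (Nat.le_zero.mp hl)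
      simp [hv1]
    | succ m ihm =>
      intro v hv hl
      obtain ⟨κ, hκK, hκv, hκred⟩ := exists_reduced_word_mem_parabolic cs hv
      rcases List.eq_nil_or_concat κ with rfl | ⟨κ', j, rfl⟩
      · rw [← hκv]
        simp
      · rw [List.concat_eq_append] at hκK hκv hκred
        have hκ'red : cs.IsReduced κ' := by
          have h1 := hκred.take κ'.length
          rwa [List.take_left] at h1
        have hv'P : π κ' ∈ P := wordProd_mem_parabolic cs κ'
          (fun i hi => hκK i (List.mem_append_left _ hi))
        have hjK : j ∈ K := hκK j (List.mem_append_right _ (by simp))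
        have hvv : v = π κ' * s j := by
          rw [← hκv, cs.wordProd_append]
          simp [cs.wordProd_cons]
        have hlv : ℓ v = ℓ (π κ') + 1 := by
          rw [← hκv, hκred, hκ'red, List.length_append]
          simp
        have ihv' : ℓ (u * π κ') = ℓ u + ℓ (π κ') := ihm (π κ') hv'P (by omega)
        rcases cs.length_mul_simple (u * π κ') j with hcase | hcase
        · rw [hvv, ← mul_assoc, hcase, ihv', ← hvv]
          omega
        · exfalso
          have hdesc : ℓ (u * π κ' * s j) < ℓ (u * π κ') := by omega
          obtain ⟨χ, hχlen, hχu⟩ := cs.exists_reduced_word u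
          have hχred : cs.IsReduced χ := by
            unfold CoxeterSystem.IsReduced
            exact hχlen
          have happ : π (χ ++ κ') = u * π κ' := by
            rw [cs.wordProd_append, ← hχu]
          have hlt : ℓ (π (χ ++ κ') * s j) < ℓ (π (χ ++ κ')) := by
            rw [happ]
            exact hdesc
          have hmem := strong_exchange cs (χ ++ κ') (s j) (cs.isReflection_simple j) hlt
          rw [rightInvSeq_append] at hmem
          rcases List.mem_append.mp hmem with hm | hm
          · obtain ⟨t, ht, heq⟩ := List.mem_map.mp hm
            have htinv := cs.isRightInversion_of_mem_rightInvSeq hχred ht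
            have ht2 : t = π κ' * s j * (π κ')⁻¹ := by
              have h3 := congrArg (fun y => π κ' * y * (π κ')⁻¹) heq
              rw [← h3]
              group
            have hPt : c₀ * (π κ' * s j * (π κ')⁻¹) ∈ P :=
              mul_mem hc₀ (mul_mem (mul_mem hv'P
                (Subgroup.subset_closure ⟨j, hjK, rfl⟩)) (inv_mem hv'P))
            have hle := hmin _ hPt
            have he : x * (c₀ * (π κ' * s j * (π κ')⁻¹)) = (π χ) * t := by
              rw [ht2, ← hχu, hu]
              group
            rw [he] at hle
            have hlu : ℓ (π χ) = Nat.find hex := by rw [← hχu, ← hn₀]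
            have := htinv.2
            omega
          · have h4 := (cs.isRightInversion_of_mem_rightInvSeq hκ'red hm).2
            rw [← hvv] at h4
            omega
  have hc1 : ℓ x = ℓ u + ℓ c₀⁻¹ := by
    have h5 := claim (ℓ c₀⁻¹) c₀⁻¹ (inv_mem hc₀) le_rfl
    rw [show u * c₀⁻¹ = x by rw [hu]; group] at h5
    exact h5
  have hc0 : c₀ = 1 := by
    by_contra hne
    obtain ⟨κ, hκK, hκv, hκred⟩ := exists_reduced_word_mem_parabolic cs (inv_mem hc₀)
    rcases List.eq_nil_or_concat κ with rfl | ⟨κ', j, rfl⟩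
    · apply hne
      have h6 : c₀⁻¹ = 1 := by rw [← hκv]; simp
      exact inv_eq_one.mp h6
    · rw [List.concat_eq_append] at hκK hκv hκred
      have hjK : j ∈ K := hκK j (List.mem_append_right _ (by simp))
      have hκ'P : π κ' ∈ P := wordProd_mem_parabolic cs κ'
        (fun i hi => hκK i (List.mem_append_left _ hi))
      have hx1 : x * s j = u * π κ' := by
        have h7 : c₀⁻¹ * s j = π κ' := by
          rw [← hκv, cs.wordProd_append]
          simp [cs.wordProd_cons, mul_assoc, cs.simple_mul_simple_self]
        rw [← h7, hu]
        group
      have h8 : ℓ (x * s j) = ℓ u + ℓ (π κ') := by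
        rw [hx1]
        exact claim _ _ hκ'P le_rfl
      have h9 : ℓ (π κ') ≤ κ'.length := cs.length_wordProd_le κ'
      have h10 : ℓ c₀⁻¹ = κ'.length + 1 := by
        rw [← hκv, hκred, List.length_append]
        simp
      have h11 := hx j hjK
      omega
  intro v hv
  have := claim (ℓ v) v hv le_rfl
  rw [hu, hc0, mul_one] at this
  exact this


theorem conj_mem_parabolic {A K' : Set B} (y : W)
    (h : ∀ i ∈ A, y * cs.simple i * y⁻¹ ∈ parabolicSE cs K') :
    ∀ w ∈ parabolicSE cs A, y * w * y⁻¹ ∈ parabolicSE cs K' := by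
  intro w hw
  induction hw using Subgroup.closure_induction with
  | mem z hz =>
    obtain ⟨i, hi, rfl⟩ := hz
    exact h i hi
  | one => simpa using one_mem _
  | mul a b _ _ iha ihb =>
    have e : y * (a * b) * y⁻¹ = (y * a * y⁻¹) * (y * b * y⁻¹) := by group
    rw [e]
    exact mul_mem iha ihb
  | inv a _ iha =>
    have e : y * a⁻¹ * y⁻¹ = (y * a * y⁻¹)⁻¹ := by group
    rw [e]
    exact inv_mem iha

end SE

theorem exists_K_longest_conjugate
    {B W : Type*} [Group W] [Finite W] {M : CoxeterMatrix B}
    (cs : CoxeterSystem M W) (x : W) (J : Set B)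
    (hJ : J ⊆ simpleCap cs x)
    (wJ : W) (hwJ : IsLongestIn cs J wJ) :
    ∃ (K : Set B) (wK : W), IsLongestIn cs K wK ∧
      (∀ j ∈ K, ∃ i ∈ J, cs.simple i * x = x * cs.simple j ∧
        cs.length (x * cs.simple j) = cs.length x + 1) ∧
      (∀ i ∈ J, ∃ j ∈ K, cs.simple i * x = x * cs.simple j ∧
        cs.length (x * cs.simple j) = cs.length x + 1) ∧
      wJ * x = x * wK := by
  classical
  set K : Set B := {j | ∃ i ∈ J, cs.simple i * x = x * cs.simple j ∧
      cs.length (x * cs.simple j) = cs.length x + 1} with hKdef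
  have hKmem : ∀ j ∈ K, ∃ i ∈ J, cs.simple i * x = x * cs.simple j ∧
      cs.length (x * cs.simple j) = cs.length x + 1 := fun j hj => hj
  have hJmem : ∀ i ∈ J, ∃ j ∈ K, cs.simple i * x = x * cs.simple j ∧
      cs.length (x * cs.simple j) = cs.length x + 1 := by
    intro i hi
    obtain ⟨j, h1, h2⟩ := hJ hi
    exact ⟨j, ⟨i, hi, h1, h2⟩, h1, h2⟩
  have hPeqK : SE.parabolicSE cs K = parabolic cs K := rfl
  have hPeqJ : SE.parabolicSE cs J = parabolic cs J := rfl
  have hconjK : ∀ w ∈ parabolic cs J, x⁻¹ * w * x ∈ parabolic cs K := by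
    intro w hw
    have h := SE.conj_mem_parabolic cs (A := J) (K' := K) x⁻¹ ?_ w (by rw [hPeqJ]; exact hw)
    · rw [hPeqK] at h
      rwa [inv_inv] at h
    · intro i hi
      obtain ⟨j, hjK, h1, h2⟩ := hJmem i hi
      have e : x⁻¹ * cs.simple i * x⁻¹⁻¹ = cs.simple j := by
        rw [inv_inv, mul_assoc, h1]
        group
      rw [e, hPeqK]
      exact Subgroup.subset_closure ⟨j, hjK, rfl⟩
  have hconjJ : ∀ w ∈ parabolic cs K, x * w * x⁻¹ ∈ parabolic cs J := by
    intro w hw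
    have h := SE.conj_mem_parabolic cs (A := K) (K' := J) x ?_ w (by rw [hPeqK]; exact hw)
    · rwa [hPeqJ] at h
    · intro j hj
      obtain ⟨i, hiJ, h1, h2⟩ := hKmem j hj
      have e : x * cs.simple j * x⁻¹ = cs.simple i := by
        rw [← h1]
        group
      rw [e, hPeqJ]
      exact Subgroup.subset_closure ⟨i, hiJ, rfl⟩
  have hKnd : ∀ j ∈ K, cs.length x < cs.length (x * cs.simple j) := by
    intro j hj
    obtain ⟨i, _, _, h2⟩ := hKmem j hj
    omega
  have AK : ∀ v ∈ parabolic cs K, cs.length (x * v) = cs.length x + cs.length v := by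
    intro v hv
    exact SE.length_mul_eq_of_no_descent cs x hKnd v (by rw [hPeqK]; exact hv)
  have hJnd : ∀ i ∈ J, cs.length x⁻¹ < cs.length (x⁻¹ * cs.simple i) := by
    intro i hi
    obtain ⟨j, hjK, h1, h2⟩ := hJmem i hi
    have e : (x⁻¹ * cs.simple i)⁻¹ = cs.simple i * x := by
      rw [mul_inv_rev, inv_inv, cs.inv_simple]
    have e2 : cs.length (x⁻¹ * cs.simple i) = cs.length (x * cs.simple j) := by
      rw [← cs.length_inv, e, h1]
    rw [e2, cs.length_inv]
    omega
  have AJ' : ∀ u ∈ parabolic cs J, cs.length (u * x) = cs.length u + cs.length x := by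
    intro u hu
    have h1 := SE.length_mul_eq_of_no_descent cs x⁻¹ hJnd u⁻¹
      (by rw [hPeqJ]; exact inv_mem hu)
    rw [← cs.length_inv (u * x), mul_inv_rev, h1, cs.length_inv, cs.length_inv]
    omega
  have hwKmem : x⁻¹ * (wJ * x) ∈ parabolic cs K := by
    have h := hconjK wJ hwJ.1
    rwa [mul_assoc] at h
  refine ⟨K, x⁻¹ * (wJ * x), ⟨hwKmem, ?_⟩, hKmem, hJmem, by group⟩
  intro v hv
  have hv' := hconjJ v hv
  have e1 : cs.length (x * v) = cs.length x + cs.length v := AK v hv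
  have e2 : x * v = (x * v * x⁻¹) * x := by group
  have e3 : cs.length ((x * v * x⁻¹) * x) = cs.length (x * v * x⁻¹) + cs.length x :=
    AJ' _ hv'
  have e4 : cs.length (x * v * x⁻¹) ≤ cs.length wJ := hwJ.2 _ hv'
  have e5 : cs.length (x * (x⁻¹ * (wJ * x))) = cs.length x + cs.length (x⁻¹ * (wJ * x)) :=
    AK _ hwKmem
  have e6 : x * (x⁻¹ * (wJ * x)) = wJ * x := by group
  have e7 : cs.length (wJ * x) = cs.length wJ + cs.length x := AJ' wJ hwJ.1
  rw [e2] at e1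
  rw [e6] at e5
  omega
end

section
/- Let W be a Weyl group with simple roots Π. Let x, u ∈ W with u⁻¹ ≤_R x in the weak right order and let J ⊆ Π ∩ xΠ. Then ℓ(u w_J) = ℓ(u) + ℓ(w_J) and ℓ(u w_J x) = ℓ(x) + ℓ(w_J) − ℓ(u), where w_J is the longest element of the parabolic subgroup W_J. -/
/-!
STATEMENT 5: If `u⁻¹ ≤_R x` and `J ⊆ Π ∩ xΠ`, then `ℓ(u w_J) = ℓ(u) + ℓ(w_J)` and
`ℓ(u w_J x) = ℓ(x) + ℓ(w_J) − ℓ(u)` (written additively to avoid truncated subtraction).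
-/

open scoped Classical

namespace AuxCox
open CoxeterSystem List

variable {B W : Type*} [Group W] {M : CoxeterMatrix B} (cs : CoxeterSystem M W)

local prefix:100 "s" => cs.simple
local prefix:100 "π" => cs.wordProd
local prefix:100 "ℓ" => cs.length
local prefix:100 "ris" => cs.rightInvSeq

/-- The parity cocycle generator. -/
noncomputable def eta (i : B) : Function.End (W × ZMod 2) :=
  fun p => (s i * p.1 * s i, p.2 + if p.1 = s i then 1 else 0)

theorem eta_liftable : CoxeterMatrix.IsLiftable M (eta cs) := by
  intro i i'
  set m := M i i' with hm
  set p : W := s i * s i' with hp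
  have hpm : p ^ m = 1 := cs.simple_mul_simple_pow i i'
  have key : ∀ (k : ℕ) (t : W) (ε : ZMod 2),
      ((eta cs i * eta cs i') ^ k) (t, ε) =
        (p ^ k * t * (p ^ k)⁻¹,
          ε + ∑ e ∈ Finset.range (2 * k), (if p ^ e * t = s i' then (1 : ZMod 2) else 0)) := by
    intro k
    induction k with
    | zero => intro t ε; simp [Function.End.one_def]
    | succ k ih =>
      intro t ε
      have hstep : ((eta cs i * eta cs i') ^ (k+1)) (t, ε)
          = ((eta cs i * eta cs i') ^ k) ((eta cs i * eta cs i') (t, ε)) := by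
        rw [pow_succ]; rfl
      have hiff0 : (t = s i') ↔ (p ^ 0 * t = s i') := by simp
      have hiff1 : (s i' * t * s i' = s i) ↔ (p ^ 1 * t = s i') := by
        rw [pow_one, hp]
        constructor <;> intro h
        · have h3 : s i' * t * s i' * s i' = s i * s i' := by rw [h]
          rw [cs.simple_mul_simple_cancel_right] at h3
          rw [mul_assoc, h3, ← mul_assoc, cs.simple_mul_simple_self, one_mul]
        · have h3 : s i * (s i * s i' * t) = s i * s i' := by rw [h]
          simp only [← mul_assoc] at h3
          rw [cs.simple_mul_simple_self, one_mul] at h3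
          rw [h3]
          exact cs.simple_mul_simple_cancel_right i'
      have hg : (eta cs i * eta cs i') (t, ε)
          = (p * t * p⁻¹, ε + ((if p ^ 0 * t = s i' then (1:ZMod 2) else 0)
              + (if p ^ 1 * t = s i' then (1:ZMod 2) else 0))) := by
        show eta cs i (eta cs i' (t, ε)) = _
        simp only [eta]
        simp only [Prod.mk.injEq]
        refine ⟨?_, ?_⟩
        · rw [hp, mul_inv_rev, cs.inv_simple, cs.inv_simple]
          simp [mul_assoc]
        · rw [add_assoc]; congr 2
          exacts [if_congr hiff0 rfl rfl, if_congr hiff1 rfl rfl]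
      have hsp : s i' * p = p⁻¹ * s i' := by
        rw [hp, mul_inv_rev, cs.inv_simple, cs.inv_simple]
        simp [mul_assoc]
      have hper : ∀ e : ℕ, (if p ^ e * (p * t * p⁻¹) = s i' then (1:ZMod 2) else 0)
          = (if p ^ (e + 2) * t = s i' then (1:ZMod 2) else 0) := by
        intro e
        refine if_congr ?_ rfl rfl
        constructor <;> intro h
        · have h' : p ^ (e+1) * t = s i' * p := by
            calc p ^ (e+1) * t = (p ^ e * (p * t * p⁻¹)) * p := by group
              _ = s i' * p := by rw [h]
          rw [hsp] at h'
          calc p ^ (e+2) * t = p * (p ^ (e+1) * t) := by group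
            _ = p * (p⁻¹ * s i') := by rw [h']
            _ = s i' := by group
        · have h2 : s i' * p⁻¹ = p * s i' := by
            have := congrArg (fun z => p * z * p⁻¹) hsp
            simpa [mul_assoc] using this.symm
          calc p ^ e * (p * t * p⁻¹) = p⁻¹ * (p ^ (e+2) * t) * p⁻¹ := by group
            _ = p⁻¹ * s i' * p⁻¹ := by rw [h]
            _ = p⁻¹ * (p * s i') := by rw [mul_assoc, h2]
            _ = s i' := by group
      rw [hstep, hg, ih]
      simp only [Prod.mk.injEq]
      refine ⟨by group, ?_⟩
      rw [Finset.sum_congr rfl (fun e _ => hper e)]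
      have h2k : 2 * (k + 1) = 2 * k + 1 + 1 := by ring
      rw [h2k, Finset.sum_range_succ', Finset.sum_range_succ']
      have he2 : ∀ e : ℕ, e + 1 + 1 = e + 2 := fun e => rfl
      simp only [he2, pow_zero, one_mul]
      ring
  funext q
  obtain ⟨t, ε⟩ := q
  rw [key m t ε, hpm]
  have : ∀ e, (if p ^ (m + e) * t = s i' then (1:ZMod 2) else 0)
      = (if p ^ e * t = s i' then (1:ZMod 2) else 0) := by
    intro e
    refine if_congr ?_ rfl rfl
    rw [pow_add, hpm, one_mul]
  have hsum : ∑ e ∈ Finset.range (2 * m), (if p ^ e * t = s i' then (1:ZMod 2) else 0) = 0 := by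
    have h2m : 2 * m = m + m := by ring
    rw [h2m, Finset.sum_range_add]
    rw [Finset.sum_congr rfl (fun e _ => this e)]
    exact CharTwo.add_self_eq_zero _
  rw [hsum]
  simp [Function.End.one_def]

/-- The parity homomorphism. -/
noncomputable def phi : W →* Function.End (W × ZMod 2) :=
  CoxeterSystem.lift cs ⟨eta cs, eta_liftable cs⟩

theorem phi_simple (i : B) : phi cs (s i) = eta cs i :=
  CoxeterSystem.lift_apply_simple cs (eta_liftable cs) i

theorem phi_wordProd (ω : List B) (t : W) (ε : ZMod 2) :
    phi cs (π ω) (t, ε) = (π ω * t * (π ω)⁻¹, ε + (((ris ω).count t : ℕ) : ZMod 2)) := by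
  induction ω generalizing ε with
  | nil => simp [CoxeterSystem.rightInvSeq, Function.End.one_def]
  | cons i ω ih =>
    rw [cs.wordProd_cons, map_mul, phi_simple]
    have : (phi cs (s i) * phi cs (π ω)) (t, ε) = phi cs (s i) (phi cs (π ω) (t, ε)) := rfl
    show eta cs i (phi cs (π ω) (t, ε)) = _
    rw [ih]
    simp only [eta]
    have hcond : (π ω * t * (π ω)⁻¹ = s i) ↔ (t = (π ω)⁻¹ * s i * π ω) := by
      constructor <;> intro h
      · rw [← h]; group
      · rw [h]; group
    have hris : (ris (i :: ω)) = ((π ω)⁻¹ * s i * π ω) :: ris ω := rfl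
    simp only [Prod.mk.injEq]
    constructor
    · rw [mul_inv_rev, cs.inv_simple]
      group
    · rw [hris, List.count_cons]
      simp only [beq_iff_eq]
      by_cases hc : t = (π ω)⁻¹ * s i * π ω
      · rw [if_pos (hcond.mpr hc), if_pos hc.symm]
        push_cast
        ring
      · rw [if_neg (fun h => hc (hcond.mp h)), if_neg (fun h => hc h.symm)]
        push_cast
        ring

theorem count_parity {ω ω' : List B} (h : π ω = π ω') (t : W) :
    (((ris ω).count t : ℕ) : ZMod 2) = (((ris ω').count t : ℕ) : ZMod 2) := by
  have h1 := phi_wordProd cs ω t 0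
  have h2 := phi_wordProd cs ω' t 0
  rw [h] at h1
  rw [h1] at h2
  have := congrArg Prod.snd h2
  simpa using this

theorem ris_append (A B' : List B) :
    ris (A ++ B') = (ris A).map (fun t => (π B')⁻¹ * t * π B') ++ ris B' := by
  induction A with
  | nil => simp [CoxeterSystem.rightInvSeq]
  | cons a A ih =>
    have h1 : ris ((a :: A) ++ B') = ((π (A ++ B'))⁻¹ * s a * π (A ++ B')) :: ris (A ++ B') := rfl
    have h2 : ris (a :: A) = ((π A)⁻¹ * s a * π A) :: ris A := rfl
    rw [h1, ih, h2, List.map_cons]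
    congr 1
    rw [cs.wordProd_append, mul_inv_rev]
    group

/-- Entries of the right inversion sequence are involutions. -/
theorem ris_sq (ω : List B) {t : W} (ht : t ∈ ris ω) : t * t = 1 := by
  induction ω with
  | nil => simp [CoxeterSystem.rightInvSeq] at ht
  | cons i ω ih =>
    have h2 : ris (i :: ω) = ((π ω)⁻¹ * s i * π ω) :: ris ω := rfl
    rw [h2, List.mem_cons] at ht
    rcases ht with rfl | ht
    · calc (π ω)⁻¹ * s i * π ω * ((π ω)⁻¹ * s i * π ω)
          = (π ω)⁻¹ * (s i * s i) * π ω := by group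
        _ = 1 := by rw [cs.simple_mul_simple_self]; group
    · exact ih ht

/-- Exchange: if `ω` is reduced and right-multiplication by `s i` decreases length,
then `s i` occurs in the right inversion sequence. -/
theorem exchange_mem {ω : List B} (hω : cs.IsReduced ω) {i : B}
    (h : ℓ (π ω * s i) < ℓ (π ω)) : s i ∈ ris ω := by
  obtain ⟨ω', hω', hw'⟩ := cs.exists_reduced_word' (π ω * s i)
  have hprod : π (ω'.concat i) = π ω := by
    rw [cs.wordProd_concat, ← hw', cs.simple_mul_simple_cancel_right]
  have hnotmem : s i ∉ ris ω' := by
    intro hmem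
    have := cs.isRightInversion_of_mem_rightInvSeq hω' hmem
    rw [← hw'] at this
    have h2 := this.2
    rw [cs.simple_mul_simple_cancel_right] at h2
    omega
  have hcount : ((ris (ω'.concat i)).count (s i) : ZMod 2) = 1 := by
    rw [cs.rightInvSeq_concat]
    have hconj : ∀ t : W, (MulAut.conj (s i)) t = s i * t * s i := by
      intro t; simp [MulAut.conj]
    have hinj : Function.Injective (MulAut.conj (s i) : W → W) :=
      (MulAut.conj (s i)).injective
    have hfix : (MulAut.conj (s i)) (s i) = s i := by
      rw [hconj, cs.simple_mul_simple_cancel_right]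
    rw [List.concat_eq_append, List.count_append]
    have hc2 := List.count_map_of_injective (ris ω') (⇑(MulAut.conj (s i))) hinj (s i)
    rw [hfix] at hc2
    rw [hc2, List.count_eq_zero.mpr hnotmem]
    simp
  have hpar := count_parity cs hprod (s i)
  rw [hcount] at hpar
  by_contra hmem
  rw [List.count_eq_zero.mpr hmem] at hpar
  simp at hpar

/-- Right exchange, producing a shorter word. -/
theorem exchange_word {ω : List B} (hω : cs.IsReduced ω) {i : B}
    (h : ℓ (π ω * s i) < ℓ (π ω)) :
    ∃ ω'', π ω'' = π ω * s i ∧ ω''.length + 1 = ω.length ∧ ∀ b ∈ ω'', b ∈ ω := by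
  have hmem := exchange_mem cs hω h
  obtain ⟨j, hj, hget⟩ := List.mem_iff_getElem.mp hmem
  rw [cs.length_rightInvSeq] at hj
  have hgetD : (ris ω).getD j 1 = s i := by
    rw [List.getD_eq_getElem _ _ (by rw [cs.length_rightInvSeq]; exact hj)]
    exact hget
  have hkey := cs.wordProd_mul_getD_rightInvSeq ω j
  rw [hgetD] at hkey
  refine ⟨ω.eraseIdx j, hkey.symm, ?_, ?_⟩
  · rw [List.length_eraseIdx_add_one hj]
  · intro b hb
    exact (List.eraseIdx_sublist ω j).mem hb

/-- Left exchange, producing a shorter word. -/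
theorem exchange_word_left {ω : List B} (hω : cs.IsReduced ω) {i : B}
    (h : ℓ (s i * π ω) < ℓ (π ω)) :
    ∃ ω'', π ω'' = s i * π ω ∧ ω''.length + 1 = ω.length ∧ ∀ b ∈ ω'', b ∈ ω := by
  have hrev : cs.IsReduced ω.reverse := (cs.isReduced_reverse_iff ω).mpr hω
  have h' : ℓ (π ω.reverse * s i) < ℓ (π ω.reverse) := by
    rw [cs.wordProd_reverse]
    have e1 : (π ω)⁻¹ * s i = (s i * π ω)⁻¹ := by
      rw [mul_inv_rev, cs.inv_simple]
    rw [e1, cs.length_inv, cs.length_inv]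
    exact h
  obtain ⟨ω'', hprod, hlen, hmem⟩ := exchange_word cs hrev h'
  refine ⟨ω''.reverse, ?_, ?_, ?_⟩
  · rw [cs.wordProd_reverse, hprod, cs.wordProd_reverse, mul_inv_rev, cs.inv_simple, inv_inv]
  · rw [List.length_reverse]
    rw [List.length_reverse] at hlen
    exact hlen
  · intro b hb
    rw [List.mem_reverse] at hb
    have := hmem b hb
    rwa [List.mem_reverse] at this

/-- Deletion condition. -/
theorem deletion : ∀ ω : List B, ¬ cs.IsReduced ω →
    ∃ ω'', π ω'' = π ω ∧ ω''.length + 2 = ω.length ∧ ∀ b ∈ ω'', b ∈ ω := by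
  intro ω
  induction ω with
  | nil => intro h; exact absurd (by simp [CoxeterSystem.IsReduced]) h
  | cons i ω ih =>
    intro h
    by_cases hred : cs.IsReduced ω
    · have hlt : ℓ (s i * π ω) < ℓ (π ω) := by
        rcases cs.length_simple_mul (π ω) i with h1 | h1
        · exfalso
          apply h
          show ℓ (π (i :: ω)) = (i :: ω).length
          rw [cs.wordProd_cons, h1, hred, List.length_cons]
        · omega
      obtain ⟨ω'', hprod, hlen, hmem⟩ := exchange_word_left cs hred hlt
      refine ⟨ω'', ?_, ?_, ?_⟩
      · rw [hprod, cs.wordProd_cons]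
      · rw [List.length_cons]
        have := hred
        omega
      · intro b hb
        exact List.mem_cons_of_mem i (hmem b hb)
    · obtain ⟨ω₂, hprod, hlen, hmem⟩ := ih hred
      refine ⟨i :: ω₂, ?_, ?_, ?_⟩
      · rw [cs.wordProd_cons, hprod, cs.wordProd_cons]
      · simp only [List.length_cons]
        omega
      · intro b hb
        rcases List.mem_cons.mp hb with rfl | hb
        · exact List.mem_cons_self
        · exact List.mem_cons_of_mem i (hmem b hb)

theorem wordProd_mem_closure {J : Set B} {ω : List B} (hω : ∀ b ∈ ω, b ∈ J) :
    π ω ∈ Subgroup.closure (cs.simple '' J) := by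
  induction ω with
  | nil => rw [cs.wordProd_nil]; exact one_mem _
  | cons i ω ih =>
    rw [cs.wordProd_cons]
    exact mul_mem (Subgroup.subset_closure ⟨i, hω i (List.mem_cons_self), rfl⟩)
      (ih (fun b hb => hω b (List.mem_cons_of_mem i hb)))

theorem exists_word_of_mem_closure {J : Set B} {w : W}
    (hw : w ∈ Subgroup.closure (cs.simple '' J)) :
    ∃ ω : List B, π ω = w ∧ ∀ b ∈ ω, b ∈ J := by
  induction hw using Subgroup.closure_induction with
  | mem g hg =>
    obtain ⟨i, hi, rfl⟩ := hg
    exact ⟨[i], by simp, by simpa using hi⟩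
  | one => exact ⟨[], by simp, by simp⟩
  | mul g g' _ _ hg hg' =>
    obtain ⟨ω, hω, hωJ⟩ := hg
    obtain ⟨ω', hω', hω'J⟩ := hg'
    refine ⟨ω ++ ω', by rw [cs.wordProd_append, hω, hω'], ?_⟩
    intro b hb
    rcases List.mem_append.mp hb with hb | hb
    exacts [hωJ b hb, hω'J b hb]
  | inv g _ hg =>
    obtain ⟨ω, hω, hωJ⟩ := hg
    refine ⟨ω.reverse, by rw [cs.wordProd_reverse, hω], ?_⟩
    intro b hb
    exact hωJ b (List.mem_reverse.mp hb)

theorem exists_reduced_subword : ∀ n (ω : List B), ω.length = n →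
    ∃ ω', cs.IsReduced ω' ∧ π ω' = π ω ∧ ∀ b ∈ ω', b ∈ ω := by
  intro n
  induction n using Nat.strong_induction_on with
  | _ n ih =>
  intro ω hlen
  by_cases hred : cs.IsReduced ω
  · exact ⟨ω, hred, rfl, fun b hb => hb⟩
  · obtain ⟨ω₂, hprod, hl2, hmem⟩ := deletion cs ω hred
    obtain ⟨ω', hred', hprod', hmem'⟩ := ih ω₂.length (by omega) ω₂ rfl
    exact ⟨ω', hred', by rw [hprod', hprod], fun b hb => hmem b (hmem' b hb)⟩

theorem exists_reduced_word_subset {J : Set B} {w : W}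
    (hw : w ∈ Subgroup.closure (cs.simple '' J)) :
    ∃ ω : List B, cs.IsReduced ω ∧ π ω = w ∧ ∀ b ∈ ω, b ∈ J := by
  obtain ⟨ω, hprod, hJ⟩ := exists_word_of_mem_closure cs hw
  obtain ⟨ω', hred', hprod', hmem'⟩ := exists_reduced_subword cs ω.length ω rfl
  exact ⟨ω', hred', by rw [hprod', hprod], fun b hb => hJ b (hmem' b hb)⟩

theorem ris_mem_closure {J : Set B} {ω : List B} (hω : ∀ b ∈ ω, b ∈ J) {t : W}
    (ht : t ∈ ris ω) : t ∈ Subgroup.closure (cs.simple '' J) := by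
  induction ω with
  | nil => simp [CoxeterSystem.rightInvSeq] at ht
  | cons i ω ih =>
    have h2 : ris (i :: ω) = ((π ω)⁻¹ * s i * π ω) :: ris ω := rfl
    rw [h2, List.mem_cons] at ht
    have hJω : ∀ b ∈ ω, b ∈ J := fun b hb => hω b (List.mem_cons_of_mem i hb)
    rcases ht with rfl | ht
    · exact mul_mem (mul_mem (inv_mem (wordProd_mem_closure cs hJω))
        (Subgroup.subset_closure ⟨i, hω i (List.mem_cons_self), rfl⟩))
        (wordProd_mem_closure cs hJω)
    · exact ih hJω ht

/-- Key lemma: if no simple reflection from `J` is a left descent of `x`, then lengths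
add for products `w * x` with `w` in the parabolic subgroup generated by `J`. -/
theorem length_mul_of_parabolic {J : Set B} : ∀ n (x : W), ℓ x = n →
    (∀ i ∈ J, ℓ (s i * x) = ℓ x + 1) →
    ∀ w ∈ Subgroup.closure (cs.simple '' J), ℓ (w * x) = ℓ w + ℓ x := by
  intro n
  induction n using Nat.strong_induction_on with
  | _ n ih =>
  intro x hxn hH w hw
  rcases eq_or_ne x 1 with rfl | hx1
  · simp
  obtain ⟨m, hm⟩ := cs.exists_rightDescent_of_ne_one hx1
  have hm' : ℓ (x * s m) < ℓ x := hm
  set x₁ := x * s m with hx₁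
  have hlx₁ : ℓ x₁ + 1 = ℓ x := by
    rcases cs.length_mul_simple x m with h1 | h1 <;> rw [← hx₁] at h1 <;> omega
  have hxx₁ : x = x₁ * s m := by
    rw [hx₁, cs.simple_mul_simple_cancel_right]
  have hH₁ : ∀ i ∈ J, ℓ (s i * x₁) = ℓ x₁ + 1 := by
    intro i hi
    have h1 := hH i hi
    have h2 : s i * x = s i * x₁ * s m := by rw [hxx₁, ← mul_assoc]
    have h3 : ℓ (s i * x₁) ≤ ℓ x₁ + 1 := by
      have := cs.length_mul_le (s i) x₁
      rw [cs.length_simple] at this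
      omega
    rcases cs.length_mul_simple (s i * x₁) m with h4 | h4 <;> rw [← h2] at h4 <;> omega
  have IH : ∀ w ∈ Subgroup.closure (cs.simple '' J), ℓ (w * x₁) = ℓ w + ℓ x₁ :=
    ih (ℓ x₁) (by omega) x₁ rfl hH₁
  have hwx₁ : ℓ (w * x₁) = ℓ w + ℓ x₁ := IH w hw
  have hassoc : w * x = w * x₁ * s m := by rw [hxx₁, ← mul_assoc]
  rcases cs.length_mul_simple (w * x₁) m with h4 | h4
  · rw [hassoc, h4]
    omega
  -- Bad case: derive a contradiction.
  exfalso
  obtain ⟨ωw, hredw, hprodw, hJw⟩ := exists_reduced_word_subset cs hw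
  obtain ⟨ω₁, hred₁, hprod₁⟩ := cs.exists_reduced_word' x₁
  have hprodc : π (ωw ++ ω₁) = w * x₁ := by
    rw [cs.wordProd_append, hprodw, ← hprod₁]
  have hredc : cs.IsReduced (ωw ++ ω₁) := by
    show ℓ (π (ωw ++ ω₁)) = (ωw ++ ω₁).length
    rw [hprodc, List.length_append, hwx₁, ← hredw, ← hred₁, hprodw, hprod₁]
  have hlt : ℓ (π (ωw ++ ω₁) * s m) < ℓ (π (ωw ++ ω₁)) := by
    rw [hprodc]
    omega
  have hmem := exchange_mem cs hredc hlt
  rw [ris_append cs] at hmem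
  rcases List.mem_append.mp hmem with hmem | hmem
  · -- the erased letter is in the `ωw` part
    obtain ⟨r, hr, hfr⟩ := List.mem_map.mp hmem
    have hrcl : r ∈ Subgroup.closure (cs.simple '' J) := ris_mem_closure cs hJw hr
    have hrsq : r * r = 1 := ris_sq cs ωw hr
    have hsm : (π ω₁)⁻¹ * r * π ω₁ = s m := hfr
    rw [← hprod₁] at hsm
    have hx_eq : x = r * x₁ := by
      rw [hxx₁, ← hsm]
      group
    have hr1 : ℓ (r * x₁) = ℓ r + ℓ x₁ := IH r hrcl
    have hlr : ℓ r = 1 := by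
      rw [← hx_eq] at hr1
      omega
    obtain ⟨ρ, hredρ, hprodρ, hJρ⟩ := exists_reduced_word_subset cs hrcl
    have hρlen : ρ.length = 1 := by
      have h5 : ℓ (π ρ) = ρ.length := hredρ
      rw [hprodρ, hlr] at h5
      omega
    obtain ⟨j₀, rfl⟩ := List.length_eq_one_iff.mp hρlen
    have hj₀ : j₀ ∈ J := hJρ j₀ (List.mem_singleton_self _)
    have hrj₀ : r = s j₀ := by rw [← hprodρ, cs.wordProd_singleton]
    have hrx : r * x = x₁ := by rw [hx_eq, ← mul_assoc, hrsq, one_mul]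
    have := hH j₀ hj₀
    rw [← hrj₀, hrx] at this
    omega
  · -- the erased letter is in the `ω₁` part: contradiction with `x₁ * s m = x` longer
    have := cs.isRightInversion_of_mem_rightInvSeq hred₁ hmem
    have h2 := this.2
    rw [← hprod₁, ← hxx₁] at h2
    omega

theorem conj_word {J : Set B} {x : W} (hx : ∀ i ∈ J, ∃ j, s i * x = x * s j) :
    ∀ ω : List B, (∀ b ∈ ω, b ∈ J) →
      ∃ ω' : List B, ω'.length = ω.length ∧ x⁻¹ * π ω * x = π ω' := by
  intro ω
  induction ω with
  | nil => exact fun _ => ⟨[], by simp, by simp⟩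
  | cons i ω ih =>
    intro hJ
    obtain ⟨ω', hlen, hconj⟩ := ih (fun b hb => hJ b (List.mem_cons_of_mem i hb))
    obtain ⟨j, hj⟩ := hx i (hJ i (List.mem_cons_self))
    refine ⟨j :: ω', by simp [hlen], ?_⟩
    have hsj : x⁻¹ * s i * x = s j := by
      rw [mul_assoc, hj, ← mul_assoc, inv_mul_cancel, one_mul]
    rw [cs.wordProd_cons, cs.wordProd_cons, ← hconj, ← hsj]
    group

end AuxCox

theorem length_u_wJ_and_u_wJ_x
    {B W : Type*} [Group W] [Finite W] {M : CoxeterMatrix B}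
    (cs : CoxeterSystem M W) (x u : W) (J : Set B)
    (hu : leR cs u⁻¹ x)
    (hJ : J ⊆ simpleCap cs x)
    (wJ : W) (hwJ : IsLongestIn cs J wJ) :
    cs.length (u * wJ) = cs.length u + cs.length wJ ∧
    cs.length (u * wJ * x) + cs.length u = cs.length x + cs.length wJ := by
  obtain ⟨v, hxv, hlenx⟩ := hu
  rw [cs.length_inv] at hlenx
  have hH : ∀ i ∈ J, cs.length (cs.simple i * x) = cs.length x + 1 := by
    intro i hi
    obtain ⟨j, hcomm, hlen⟩ := hJ hi
    rw [hcomm]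
    exact hlen
  have hA : ∀ w ∈ Subgroup.closure (cs.simple '' J),
      cs.length (w * x) = cs.length w + cs.length x :=
    AuxCox.length_mul_of_parabolic cs (cs.length x) x rfl hH
  have hwJmem : wJ ∈ Subgroup.closure (cs.simple '' J) := hwJ.1
  have hv : v = u * x := by rw [hxv, ← mul_assoc, mul_inv_cancel, one_mul]
  -- Part 1
  have e1 : cs.length (wJ⁻¹ * x) = cs.length wJ + cs.length x := by
    rw [hA wJ⁻¹ (inv_mem hwJmem), cs.length_inv]
  have hsplit : wJ⁻¹ * x = (wJ⁻¹ * u⁻¹) * v := by rw [hxv]; group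
  have e2 : cs.length (wJ⁻¹ * x) ≤ cs.length (wJ⁻¹ * u⁻¹) + cs.length v := by
    rw [hsplit]
    exact cs.length_mul_le _ _
  have e3 : cs.length (u * wJ) = cs.length (wJ⁻¹ * u⁻¹) := by
    rw [← cs.length_inv (u * wJ), mul_inv_rev]
  have e4 : cs.length (wJ⁻¹ * u⁻¹) ≤ cs.length wJ + cs.length u := by
    have := cs.length_mul_le wJ⁻¹ u⁻¹
    rwa [cs.length_inv, cs.length_inv] at this
  have part1 : cs.length (u * wJ) = cs.length u + cs.length wJ := by omega
  refine ⟨part1, ?_⟩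
  -- Part 2
  have f1 : cs.length (wJ * x) = cs.length wJ + cs.length x := hA wJ hwJmem
  have f2 : wJ * x = u⁻¹ * (u * wJ * x) := by group
  have f3 : cs.length (wJ * x) ≤ cs.length u + cs.length (u * wJ * x) := by
    rw [f2]
    have := cs.length_mul_le u⁻¹ (u * wJ * x)
    rwa [cs.length_inv] at this
  -- upper bound via conjugation
  obtain ⟨ωJ, hredJ, hprodJ, hJω⟩ := AuxCox.exists_reduced_word_subset cs hwJmem
  obtain ⟨ω', hlen', hconj'⟩ := AuxCox.conj_word cs
    (fun i hi => ⟨(hJ hi).choose, (hJ hi).choose_spec.1⟩) ωJ hJω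
  have f4 : cs.length (x⁻¹ * wJ * x) ≤ cs.length wJ := by
    rw [← hprodJ]
    have h5 := cs.length_wordProd_le ω'
    rw [← hconj'] at h5
    calc cs.length (x⁻¹ * cs.wordProd ωJ * x) ≤ ω'.length := h5
      _ = ωJ.length := hlen'
      _ = cs.length (cs.wordProd ωJ) := hredJ.symm
  have f5 : u * wJ * x = v * (x⁻¹ * wJ * x) := by rw [hv]; group
  have f6 : cs.length (u * wJ * x) ≤ cs.length v + cs.length wJ := by
    rw [f5]
    have := cs.length_mul_le v (x⁻¹ * wJ * x)
    omega
  omega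
end
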